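/- Let g_rd and g_sd be independent real random variables with g_rd ~ Gamma(m_rd, θ_rd) and g_sd ~ Gamma(m_sd, θ_sd) for integers m_rd, m_sd ≥ 1 and scales θ_rd, θ_sd > 0. Fix P_s, P_r > 0, 0 ≤ C < 1, r > 0, set γ = 2^{2r} − 1 and Q = Ψ_γ(C)/(P_r·θ_rd·(1 − C²)). Then the R–D outage probability P[(P_r·g_rd + P_s·g_sd + 1)² − (P_r·g_rd·C)² < 2^{2r}·(P_s·g_sd + 1)²] equals 1 − (e^{−Q}/(Γ(m_sd)·θ_sd^{m_sd})) · Σ_{m=0}^{m_rd−1} Σ_{k=0}^{m} binom(m,k) · P_s^k · Γ(k + m_sd) · Q^m / ( m! · (P_s·Q + 1/θ_sd)^{k + m_sd} ). -/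

import Mathlib

open MeasureTheory ProbabilityTheory Real Finset
open scoped NNReal ENNReal

/-- `Psi γ x = √(1 + γ(1 - x²)) - 1`. -/
noncomputable def Psi (γ x : ℝ) : ℝ := Real.sqrt (1 + γ * (1 - x ^ 2)) - 1

/-- The Gamma(m, θ) law (integer shape `m ≥ 1`, scale `θ > 0`), given by its density
`x^(m-1) e^(-x/θ) / ((m-1)! θ^m)` on `[0, ∞)`. -/
noncomputable def gammaLaw (m : ℕ) (θ : ℝ) : Measure ℝ :=
  volume.withDensity fun x =>
    ENNReal.ofReal
      (if 0 ≤ x then x ^ (m - 1) * Real.exp (-x / θ) / ((Nat.factorial (m - 1) : ℝ) * θ ^ m)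
       else 0)

/-! ### Auxiliary lemmas -/

section Aux

open Filter

/-- The real density of `gammaLaw`. -/
noncomputable def densR (m : ℕ) (θ : ℝ) (x : ℝ) : ℝ :=
  if 0 ≤ x then x ^ (m - 1) * Real.exp (-x / θ) / ((Nat.factorial (m - 1) : ℝ) * θ ^ m) else 0

lemma densR_nonneg (m : ℕ) {θ : ℝ} (hθ : 0 < θ) (x : ℝ) : 0 ≤ densR m θ x := by
  unfold densR
  split_ifs with h
  · positivity
  · exact le_refl 0

lemma measurable_densR (m : ℕ) (θ : ℝ) : Measurable (densR m θ) := by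
  unfold densR
  exact Measurable.ite measurableSet_Ici
    (((measurable_id.pow_const (m-1)).mul
      (Real.measurable_exp.comp ((measurable_id.neg).div_const θ))).div_const _)
    measurable_const

lemma gammaLaw_eq (m : ℕ) (θ : ℝ) :
    gammaLaw m θ = volume.withDensity (fun x => ENNReal.ofReal (densR m θ x)) := rfl

lemma gammaLaw_neg_null (m : ℕ) (θ : ℝ) : gammaLaw m θ (Set.Iio 0) = 0 := by
  rw [gammaLaw_eq, withDensity_apply _ measurableSet_Iio]
  have hz : ∀ᵐ x ∂(volume.restrict (Set.Iio 0)), ENNReal.ofReal (densR m θ x) = 0 := by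
    refine (ae_restrict_iff' measurableSet_Iio).mpr (ae_of_all _ fun x hx => ?_)
    simp [densR, not_le.mpr (Set.mem_Iio.mp hx)]
  rw [lintegral_congr_ae hz, lintegral_zero]

lemma measure_eq_of_inter_Ici {ν : Measure ℝ} (h0 : ν (Set.Iio 0) = 0) {A B : Set ℝ}
    (h : A ∩ Set.Ici 0 = B ∩ Set.Ici 0) : ν A = ν B := by
  have key : ∀ S : Set ℝ, ν S = ν (S ∩ Set.Ici 0) := by
    intro S
    refine le_antisymm ?_ (measure_mono Set.inter_subset_left)
    have hsub : S ⊆ (S ∩ Set.Ici 0) ∪ Set.Iio 0 := by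
      intro x hx
      by_cases hx0 : 0 ≤ x
      · exact Or.inl ⟨hx, hx0⟩
      · exact Or.inr (lt_of_not_ge hx0)
    calc ν S ≤ ν ((S ∩ Set.Ici 0) ∪ Set.Iio 0) := measure_mono hsub
      _ ≤ ν (S ∩ Set.Ici 0) + ν (Set.Iio 0) := measure_union_le _ _
      _ = ν (S ∩ Set.Ici 0) := by rw [h0, add_zero]
  rw [key A, key B, h]

lemma integrableOn_pow_mul_exp_neg_mul (n : ℕ) {b : ℝ} (hb : 0 < b) {c : ℝ} (hc : 0 ≤ c) :
    IntegrableOn (fun x => x ^ n * Real.exp (-(b*x))) (Set.Ioi c) := by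
  have h := integrableOn_rpow_mul_exp_neg_mul_rpow (p := 1) (s := (n : ℝ)) (b := b)
    (by exact_mod_cast neg_one_lt_zero.trans_le (Nat.cast_nonneg n)) zero_lt_one hb
  have heq : (fun x : ℝ => x ^ (n : ℝ) * Real.exp (-b * x ^ (1:ℝ)))
      = fun x : ℝ => x ^ n * Real.exp (-(b*x)) := by
    funext x
    rw [Real.rpow_natCast, Real.rpow_one, neg_mul]
  rw [heq] at h
  exact h.mono_set (Set.Ioi_subset_Ioi hc)

lemma integrableOn_pow_mul_exp_div (n : ℕ) {θ : ℝ} (hθ : 0 < θ) {c : ℝ} (hc : 0 ≤ c) :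
    IntegrableOn (fun x => x ^ n * Real.exp (-x/θ)) (Set.Ioi c) := by
  have h := integrableOn_pow_mul_exp_neg_mul n (b := θ⁻¹) (by positivity) hc
  have heq : (fun x : ℝ => x ^ n * Real.exp (-(θ⁻¹ * x)))
      = fun x : ℝ => x ^ n * Real.exp (-x/θ) := by
    funext x
    rw [show -(θ⁻¹ * x) = -x/θ by ring]
  rwa [heq] at h

lemma hasDerivAt_tail (θ : ℝ) (hθ : 0 < θ) (n : ℕ) (x : ℝ) :
    HasDerivAt (fun x => Real.exp (-x/θ) * ∑ j ∈ range (n+1), (x/θ)^j / (j.factorial : ℝ))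
      (-(Real.exp (-x/θ) * (x/θ)^n / ((n.factorial : ℝ) * θ))) x := by
  induction n with
  | zero =>
    have h : HasDerivAt (fun x : ℝ => Real.exp (-x/θ)) (Real.exp (-x/θ) * (-1/θ)) x := by
      have h1 : HasDerivAt (fun x : ℝ => -x/θ) (-1/θ) x :=
        ((hasDerivAt_id x).neg).div_const θ
      exact h1.exp
    have h2 := h.mul_const (1 : ℝ)
    convert h2 using 1
    · rfl
    · rfl
    · funext y; simp
    · simp only [pow_zero, Nat.factorial_zero, Nat.cast_one]; ring
  | succ n ih =>
    have hsum : (fun x => Real.exp (-x/θ) * ∑ j ∈ range (n+2), (x/θ)^j / (j.factorial : ℝ))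
        = (fun x => Real.exp (-x/θ) * ∑ j ∈ range (n+1), (x/θ)^j / (j.factorial : ℝ)
            + Real.exp (-x/θ) * ((x/θ)^(n+1) / ((n+1).factorial : ℝ))) := by
      funext x
      rw [sum_range_succ]
      ring
    rw [hsum]
    have hexp : HasDerivAt (fun x : ℝ => Real.exp (-x/θ)) (Real.exp (-x/θ) * (-1/θ)) x :=
      (((hasDerivAt_id x).neg).div_const θ).exp
    have hpow : HasDerivAt (fun x : ℝ => (x/θ)^(n+1) / ((n+1).factorial : ℝ))
        (((n+1 : ℕ) : ℝ) * (x/θ)^n * (1/θ) / ((n+1).factorial : ℝ)) x := by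
      have h1 : HasDerivAt (fun x : ℝ => x/θ) (1/θ) x := (hasDerivAt_id x).div_const θ
      have := (h1.pow (n+1)).div_const ((n+1).factorial : ℝ)
      convert this using 1
      · rfl
      · rfl
      · rfl
      all_goals (push_cast; ring)
    have := ih.add (hexp.mul hpow)
    convert this using 1
    · rfl
    · rfl
    · rfl
    have hfac : ((n+1).factorial : ℝ) = ((n+1 : ℕ) : ℝ) * (n.factorial : ℝ) := by
      rw [Nat.factorial_succ]; push_cast; ring
    rw [hfac]
    field_simp
    ring

lemma gamma_tail_integral (n : ℕ) {θ : ℝ} (hθ : 0 < θ) {c : ℝ} (hc : 0 ≤ c) :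
    ∫ x in Set.Ioi c, x ^ n * Real.exp (-x/θ) / ((n.factorial : ℝ) * θ^(n+1)) =
      Real.exp (-c/θ) * ∑ j ∈ range (n+1), (c/θ)^j / (j.factorial : ℝ) := by
  set F : ℝ → ℝ := fun x => -(Real.exp (-x/θ) * ∑ j ∈ range (n+1), (x/θ)^j / (j.factorial : ℝ))
    with hF
  have hderiv : ∀ x ∈ Set.Ioi c,
      HasDerivAt F (x ^ n * Real.exp (-x/θ) / ((n.factorial : ℝ) * θ^(n+1))) x := by
    intro x _
    have h := (hasDerivAt_tail θ hθ n x).neg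
    convert h using 1
    · rfl
    · rfl
    · rfl
    rw [div_pow]
    field_simp
    ring
  have hcont : ContinuousWithinAt F (Set.Ici c) c :=
    ((hasDerivAt_tail θ hθ n c).neg.continuousAt).continuousWithinAt
  have hint : IntegrableOn
      (fun x => x ^ n * Real.exp (-x/θ) / ((n.factorial : ℝ) * θ^(n+1))) (Set.Ioi c) := by
    simpa [IntegrableOn, div_eq_mul_inv, mul_comm, mul_assoc, mul_left_comm] using
      (integrableOn_pow_mul_exp_div n hθ hc).mul_const (((n.factorial : ℝ) * θ^(n+1))⁻¹)
  have htend : Tendsto F atTop (nhds 0) := by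
    rw [hF]
    have heq : ∀ᶠ x in atTop,
        -(Real.exp (-x/θ) * ∑ j ∈ range (n+1), (x/θ)^j / (j.factorial : ℝ))
        = -(∑ j ∈ range (n+1), ((x/θ)^j * Real.exp (-(x/θ))) / (j.factorial : ℝ)) := by
      filter_upwards with x
      rw [mul_sum]
      congr 1
      refine Finset.sum_congr rfl fun j _ => ?_
      rw [neg_div]
      ring
    rw [tendsto_congr' heq]
    have hlim : Tendsto
        (fun x : ℝ => ∑ j ∈ range (n+1), ((x/θ)^j * Real.exp (-(x/θ))) / (j.factorial : ℝ))
        atTop (nhds (∑ j ∈ range (n+1), (0:ℝ))) := by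
      refine tendsto_finset_sum _ fun j _ => ?_
      have h1 : Tendsto (fun x : ℝ => x / θ) atTop atTop := tendsto_id.atTop_div_const hθ
      have h2 := (tendsto_pow_mul_exp_neg_atTop_nhds_zero j).comp h1
      simpa using h2.div_const (j.factorial : ℝ)
    simpa using hlim.neg
  have key := MeasureTheory.integral_Ioi_of_hasDerivAt_of_tendsto hcont hderiv hint htend
  rw [key, hF]
  simp

lemma gammaLaw_Ici {m : ℕ} (hm : 1 ≤ m) {θ : ℝ} (hθ : 0 < θ) {c : ℝ} (hc : 0 ≤ c) :
    gammaLaw m θ (Set.Ici c) =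
      ENNReal.ofReal (Real.exp (-c/θ) * ∑ j ∈ range m, (c/θ)^j / (j.factorial : ℝ)) := by
  obtain ⟨n, rfl⟩ : ∃ n, m = n + 1 := ⟨m - 1, (Nat.succ_pred_eq_of_pos hm).symm⟩
  rw [gammaLaw_eq, withDensity_apply _ measurableSet_Ici]
  have hcongr : ∫⁻ x in Set.Ici c, ENNReal.ofReal (densR (n+1) θ x)
      = ∫⁻ x in Set.Ici c,
          ENNReal.ofReal (x ^ n * Real.exp (-x/θ) / ((n.factorial : ℝ) * θ^(n+1))) := by
    refine setLIntegral_congr_fun measurableSet_Ici (fun x hx => ?_)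
    have h0x : 0 ≤ x := hc.trans hx
    simp only [densR, if_pos h0x, Nat.add_sub_cancel]
  rw [hcongr, ← restrict_Ioi_eq_restrict_Ici]
  rw [← ofReal_integral_eq_lintegral_ofReal]
  · rw [gamma_tail_integral n hθ hc]
  · have := (integrableOn_pow_mul_exp_div n hθ hc).mul_const (((n.factorial : ℝ) * θ^(n+1))⁻¹)
    simpa [div_eq_mul_inv] using this
  · refine (ae_restrict_iff' measurableSet_Ioi).mpr (ae_of_all _ fun x hx => ?_)
    have : (0:ℝ) < x := lt_of_le_of_lt hc hx
    positivity

lemma integral_pow_mul_exp_neg_mul (n : ℕ) {b : ℝ} (hb : 0 < b) :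
    ∫ y in Set.Ioi (0:ℝ), y ^ n * Real.exp (-(b*y)) = (n.factorial : ℝ) / b^(n+1) := by
  have h := Real.integral_rpow_mul_exp_neg_mul_Ioi (a := (n : ℝ)+1) (r := b) (by positivity) hb
  have heq : ∀ t ∈ Set.Ioi (0:ℝ),
      t ^ ((n:ℝ)+1-1) * Real.exp (-(b*t)) = t ^ n * Real.exp (-(b*t)) := by
    intro t ht
    rw [add_sub_cancel_right, Real.rpow_natCast]
  rw [setIntegral_congr_fun measurableSet_Ioi heq] at h
  rw [Real.Gamma_nat_eq_factorial,
    show ((n:ℝ)+1) = ((n+1 : ℕ) : ℝ) by push_cast; ring, Real.rpow_natCast] at h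
  rw [h, div_pow, one_pow]
  ring

lemma slice_iff (P_r P_s : ℝ) (hP_r : 0 < P_r) (hP_s : 0 < P_s) (C : ℝ)
    (hC0 : 0 ≤ C) (hC1 : C < 1) (γ : ℝ) (hγ : 0 < γ) (x y : ℝ) (hx : 0 ≤ x) (hy : 0 ≤ y) :
    ((P_r*x + P_s*y + 1)^2 - (P_r*x*C)^2 < (γ+1)*(P_s*y+1)^2)
      ↔ x < (Real.sqrt (1+γ*(1-C^2)) - 1) * (P_s*y+1) / (P_r*(1-C^2)) := by
  have hD : 0 < 1 - C^2 := by nlinarith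
  set s := Real.sqrt (1+γ*(1-C^2)) with hs_def
  have hs2 : s^2 = 1+γ*(1-C^2) := Real.sq_sqrt (by nlinarith)
  have hs0 : 0 ≤ s := Real.sqrt_nonneg _
  have hs1 : 1 < s := by nlinarith
  have hb : 0 < P_s*y+1 := by nlinarith
  have key : ((P_r*x + P_s*y + 1)^2 - (P_r*x*C)^2 - (γ+1)*(P_s*y+1)^2) * (1-C^2)
      = ((1-C^2)*(P_r*x) + (P_s*y+1)*(1+s)) * ((1-C^2)*(P_r*x) + (P_s*y+1)*(1-s)) := by
    linear_combination ((P_s*y+1)^2) * hs2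
  have hF1 : 0 < (1-C^2)*(P_r*x) + (P_s*y+1)*(1+s) := by
    nlinarith [mul_nonneg (le_of_lt hD) (mul_nonneg hP_r.le hx),
      mul_pos hb (by linarith : (0:ℝ) < 1+s)]
  constructor
  · intro h
    have h2 : ((P_r*x + P_s*y + 1)^2 - (P_r*x*C)^2 - (γ+1)*(P_s*y+1)^2) * (1-C^2) < 0 :=
      mul_neg_of_neg_of_pos (by linarith) hD
    rw [key] at h2
    have hF2 : (1-C^2)*(P_r*x) + (P_s*y+1)*(1-s) < 0 := by nlinarith
    rw [lt_div_iff₀ (by positivity)]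
    nlinarith
  · intro h
    rw [lt_div_iff₀ (by positivity)] at h
    have hF2 : (1-C^2)*(P_r*x) + (P_s*y+1)*(1-s) < 0 := by nlinarith
    have h2 : ((1-C^2)*(P_r*x) + (P_s*y+1)*(1+s)) * ((1-C^2)*(P_r*x) + (P_s*y+1)*(1-s)) < 0 :=
      mul_neg_of_pos_of_neg hF1 hF2
    rw [← key] at h2
    nlinarith

end Aux

theorem stmt_4
    {Ω : Type*} [MeasurableSpace Ω] (μ : Measure Ω) [IsProbabilityMeasure μ]
    (g_rd g_sd : Ω → ℝ) (hg_rd : Measurable g_rd) (hg_sd : Measurable g_sd)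
    (hindep : IndepFun g_rd g_sd μ)
    (m_rd m_sd : ℕ) (hm_rd : 1 ≤ m_rd) (hm_sd : 1 ≤ m_sd)
    (θ_rd θ_sd : ℝ) (hθ_rd : 0 < θ_rd) (hθ_sd : 0 < θ_sd)
    (hlaw_rd : μ.map g_rd = gammaLaw m_rd θ_rd)
    (hlaw_sd : μ.map g_sd = gammaLaw m_sd θ_sd)
    (P_s P_r : ℝ) (hP_s : 0 < P_s) (hP_r : 0 < P_r)
    (C : ℝ) (hC : C ∈ Set.Ico (0 : ℝ) 1)
    (r : ℝ) (hr : 0 < r)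
    (γ Q : ℝ) (hγ : γ = (2 : ℝ) ^ (2 * r) - 1)
    (hQ : Q = Psi γ C / (P_r * θ_rd * (1 - C ^ 2))) :
    (μ {ω | (P_r * g_rd ω + P_s * g_sd ω + 1) ^ 2 - (P_r * g_rd ω * C) ^ 2
          < (2 : ℝ) ^ (2 * r) * (P_s * g_sd ω + 1) ^ 2}).toReal
      = 1 - (Real.exp (-Q) / (Real.Gamma (m_sd : ℝ) * θ_sd ^ m_sd)) *
          ∑ m ∈ range m_rd, ∑ k ∈ range (m + 1),
            (m.choose k : ℝ) * P_s ^ k * Real.Gamma ((k : ℝ) + m_sd) * Q ^ m /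
              ((Nat.factorial m : ℝ) * (P_s * Q + 1 / θ_sd) ^ (k + m_sd)) := by
  obtain ⟨hC0, hC1⟩ := hC
  have hD : 0 < 1 - C^2 := by nlinarith
  -- basic positivity facts
  have hγpos : 0 < γ := by
    rw [hγ]
    have : (1:ℝ) < (2:ℝ) ^ (2*r) :=
      (Real.one_lt_rpow_iff_of_pos (by norm_num)).mpr (Or.inl ⟨by norm_num, by linarith⟩)
    linarith
  have hK : (2:ℝ) ^ (2*r) = γ + 1 := by rw [hγ]; ring
  have hPsi : 0 < Psi γ C := by
    unfold Psi
    have h2 : (1:ℝ) < Real.sqrt (1 + γ*(1-C^2)) := by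
      have := (Real.lt_sqrt (by norm_num : (0:ℝ) ≤ 1)).mpr
        (by nlinarith : (1:ℝ)^2 < 1 + γ*(1-C^2))
      exact this
    linarith
  have hQpos : 0 < Q := by
    rw [hQ]
    positivity
  have hlam : 0 < P_s * Q + 1/θ_sd := by positivity
  set lam : ℝ := P_s * Q + 1/θ_sd with hlam_def
  -- the event as a set in the plane
  set S : Set (ℝ × ℝ) := {p | (P_r * p.1 + P_s * p.2 + 1) ^ 2 - (P_r * p.1 * C) ^ 2
      < (2 : ℝ) ^ (2 * r) * (P_s * p.2 + 1) ^ 2} with hS_def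
  have hS : MeasurableSet S := by
    apply measurableSet_lt
    · exact ((((measurable_fst.const_mul P_r).add
        ((measurable_snd.const_mul P_s))).add measurable_const).pow_const 2).sub
        (((measurable_fst.const_mul P_r).mul_const C).pow_const 2)
    · exact ((measurable_snd.const_mul P_s).add measurable_const).pow_const 2 |>.const_mul _
  set ν₁ := gammaLaw m_rd θ_rd with hν₁
  set ν₂ := gammaLaw m_sd θ_sd with hν₂
  haveI h₁ : IsProbabilityMeasure ν₁ := hlaw_rd ▸ Measure.isProbabilityMeasure_map hg_rd.aemeasurable
  haveI h₂ : IsProbabilityMeasure ν₂ := hlaw_sd ▸ Measure.isProbabilityMeasure_map hg_sd.aemeasurable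
  have hmap : μ.map (fun ω => (g_rd ω, g_sd ω)) = ν₁.prod ν₂ := by
    rw [← hlaw_rd, ← hlaw_sd]
    exact (ProbabilityTheory.indepFun_iff_map_prod_eq_prod_map_map
      hg_rd.aemeasurable hg_sd.aemeasurable).mp hindep
  have h1 : μ {ω | (P_r * g_rd ω + P_s * g_sd ω + 1) ^ 2 - (P_r * g_rd ω * C) ^ 2
      < (2 : ℝ) ^ (2 * r) * (P_s * g_sd ω + 1) ^ 2} = (ν₁.prod ν₂) S := by
    rw [← hmap, Measure.map_apply (hg_rd.prodMk hg_sd) hS]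
    rfl
  -- the tail function
  set c : ℝ → ℝ := fun y => θ_rd * Q * (P_s * y + 1) with hc_def
  set tail : ℝ → ℝ := fun y =>
    Real.exp (-(c y)/θ_rd) * ∑ j ∈ range m_rd, ((c y)/θ_rd)^j / (j.factorial : ℝ) with htail_def
  have hcnonneg : ∀ y : ℝ, 0 ≤ y → 0 ≤ c y := fun y hy => by
    rw [hc_def]; positivity
  -- a.e. nonneg under ν₂
  have hae2 : ∀ᵐ y ∂ν₂, 0 ≤ y := by
    rw [ae_iff]
    convert gammaLaw_neg_null m_sd θ_sd using 2
    ext y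
    simp [not_le]
  -- slice computation
  have hslice : ∀ y : ℝ, 0 ≤ y →
      ν₁ ((fun x => (x, y)) ⁻¹' Sᶜ) = ENNReal.ofReal (tail y) := by
    intro y hy
    have hbound : (Real.sqrt (1+γ*(1-C^2)) - 1) * (P_s*y+1) / (P_r*(1-C^2)) = c y := by
      rw [hc_def, hQ]
      unfold Psi
      field_simp
    have hsets : ((fun x => (x, y)) ⁻¹' Sᶜ) ∩ Set.Ici 0 = Set.Ici (c y) ∩ Set.Ici 0 := by
      ext x
      simp only [Set.mem_inter_iff, Set.mem_preimage, Set.mem_compl_iff, Set.mem_Ici,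
        hS_def, Set.mem_setOf_eq]
      constructor
      · rintro ⟨hnc, hx0⟩
        refine ⟨?_, hx0⟩
        rw [not_lt, hK] at hnc
        by_contra hlt
        rw [not_le] at hlt
        have := (slice_iff P_r P_s hP_r hP_s C hC0 hC1 γ hγpos x y hx0 hy).mpr
          (by rw [hbound]; exact hlt)
        linarith
      · rintro ⟨hcx, hx0⟩
        refine ⟨?_, hx0⟩
        rw [hK, not_lt]
        by_contra hlt
        rw [not_le] at hlt
        have := (slice_iff P_r P_s hP_r hP_s C hC0 hC1 γ hγpos x y hx0 hy).mp hlt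
        rw [hbound] at this
        linarith
    rw [measure_eq_of_inter_Ici (gammaLaw_neg_null m_rd θ_rd) hsets]
    exact gammaLaw_Ici hm_rd hθ_rd (hcnonneg y hy)
  -- the complement probability as a lintegral
  have h2 : (ν₁.prod ν₂) Sᶜ = ∫⁻ y, ENNReal.ofReal (tail y) ∂ν₂ := by
    rw [Measure.prod_apply_symm hS.compl]
    refine lintegral_congr_ae ?_
    filter_upwards [hae2] with y hy
    exact hslice y hy
  -- reduction to m_sd = n₂ + 1
  obtain ⟨n₂, hn₂⟩ : ∃ n, m_sd = n + 1 := ⟨m_sd - 1, (Nat.succ_pred_eq_of_pos hm_sd).symm⟩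
  -- the real density-weighted integrand
  set h : ℝ → ℝ := fun y =>
    (y ^ n₂ * Real.exp (-y/θ_sd) / ((n₂.factorial : ℝ) * θ_sd^(n₂+1))) * tail y with hh_def
  -- expansion of h into a double sum
  have hexp : ∀ y : ℝ, h y = ∑ m ∈ range m_rd, ∑ k ∈ range (m+1),
      ((m.choose k : ℝ) * P_s^k * Q^m * Real.exp (-Q)
        / ((m.factorial : ℝ) * (n₂.factorial : ℝ) * θ_sd^(n₂+1)))
      * (y^(k+n₂) * Real.exp (-(lam*y))) := by
    intro y
    have hcy : c y / θ_rd = Q * (P_s*y+1) := by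
      rw [hc_def]
      field_simp
    have hexps : Real.exp (-(Q * (P_s*y+1))) * Real.exp (-(y/θ_sd))
        = Real.exp (-Q) * Real.exp (-(lam*y)) := by
      rw [← Real.exp_add, ← Real.exp_add, hlam_def]
      congr 1
      field_simp
      ring
    simp only [hh_def, htail_def, neg_div, hcy, Finset.mul_sum]
    refine Finset.sum_congr rfl fun m _ => ?_
    have hpow : (Q * (P_s*y+1))^m = Q^m * ∑ k ∈ range (m+1), (P_s*y)^k * (m.choose k : ℝ) := by
      rw [mul_pow, add_pow]
      congr 1
      exact Finset.sum_congr rfl fun k _ => by rw [one_pow, mul_one]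
    rw [hpow]
    simp only [Finset.mul_sum, Finset.sum_div]
    refine Finset.sum_congr rfl fun k _ => ?_
    calc y ^ n₂ * rexp (-(y / θ_sd)) / (↑n₂.factorial * θ_sd ^ (n₂ + 1)) *
          (rexp (-(Q * (P_s * y + 1))) * (Q ^ m * ((P_s * y) ^ k * ↑(m.choose k)) / ↑m.factorial))
        = (y^n₂ * y^k * Q^m * P_s^k * (m.choose k : ℝ)
            / ((n₂.factorial : ℝ) * θ_sd^(n₂+1) * (m.factorial : ℝ)))
          * (Real.exp (-(Q * (P_s*y+1))) * Real.exp (-(y/θ_sd))) := by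
          rw [mul_pow]; ring
      _ = (y^n₂ * y^k * Q^m * P_s^k * (m.choose k : ℝ)
            / ((n₂.factorial : ℝ) * θ_sd^(n₂+1) * (m.factorial : ℝ)))
          * (Real.exp (-Q) * Real.exp (-(lam*y))) := by rw [hexps]
      _ = ↑(m.choose k) * P_s ^ k * Q ^ m * rexp (-Q) /
            (↑m.factorial * ↑n₂.factorial * θ_sd ^ (n₂ + 1)) *
          (y ^ (k + n₂) * rexp (-(lam * y))) := by
          rw [pow_add]; ring
  -- integrability of h on Ioi 0
  have hint_h : IntegrableOn h (Set.Ioi 0) := by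
    have : IntegrableOn (fun y => ∑ m ∈ range m_rd, ∑ k ∈ range (m+1),
        ((m.choose k : ℝ) * P_s^k * Q^m * Real.exp (-Q)
          / ((m.factorial : ℝ) * (n₂.factorial : ℝ) * θ_sd^(n₂+1)))
        * (y^(k+n₂) * Real.exp (-(lam*y)))) (Set.Ioi 0) := by
      apply MeasureTheory.integrable_finset_sum
      intro m _
      apply MeasureTheory.integrable_finset_sum
      intro k _
      exact (integrableOn_pow_mul_exp_neg_mul (k+n₂) hlam le_rfl).const_mul _
    exact this.congr_fun (fun y _ => (hexp y).symm) measurableSet_Ioi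
  -- the value of the integral of h on Ioi 0
  have hval : ∫ y in Set.Ioi 0, h y = ∑ m ∈ range m_rd, ∑ k ∈ range (m+1),
      ((m.choose k : ℝ) * P_s^k * Q^m * Real.exp (-Q)
        / ((m.factorial : ℝ) * (n₂.factorial : ℝ) * θ_sd^(n₂+1)))
      * (((k+n₂).factorial : ℝ) / lam^(k+n₂+1)) := by
    rw [setIntegral_congr_fun measurableSet_Ioi (fun y _ => hexp y)]
    rw [MeasureTheory.integral_finset_sum _ (fun m _ => MeasureTheory.integrable_finset_sum _
      (fun k _ => (integrableOn_pow_mul_exp_neg_mul (k+n₂) hlam le_rfl).const_mul _))]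
    refine Finset.sum_congr rfl fun m _ => ?_
    rw [MeasureTheory.integral_finset_sum _
      (fun k _ => (integrableOn_pow_mul_exp_neg_mul (k+n₂) hlam le_rfl).const_mul _)]
    refine Finset.sum_congr rfl fun k _ => ?_
    rw [integral_const_mul, integral_pow_mul_exp_neg_mul (k+n₂) hlam]
  -- the integral of tail with respect to ν₂
  have hW : ∀ y : ℝ, ((densR m_sd θ_sd y).toNNReal : ℝ≥0) • tail y
      = Set.indicator (Set.Ici 0) h y := by
    intro y
    have hsm : ((densR m_sd θ_sd y).toNNReal : ℝ≥0) • tail y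
        = (densR m_sd θ_sd y) * tail y := by
      rw [NNReal.smul_def, Real.coe_toNNReal _ (densR_nonneg m_sd hθ_sd y), smul_eq_mul]
    rw [hsm]
    by_cases hy : 0 ≤ y
    · rw [Set.indicator_of_mem (Set.mem_Ici.mpr hy) h]
      simp only [hh_def, densR, if_pos hy, hn₂, Nat.add_sub_cancel]
    · rw [Set.indicator_of_notMem (fun hmem => hy (Set.mem_Ici.mp hmem)) h]
      simp [densR, hy]
  have hintW : Integrable (fun y => Set.indicator (Set.Ici 0) h y) volume := by
    rw [show (fun y => Set.indicator (Set.Ici 0) h y) = Set.indicator (Set.Ici 0) h from rfl]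
    apply (Iff.mpr integrableOn_Ici_iff_integrableOn_Ioi hint_h).integrable_indicator
      measurableSet_Ici
  have hdmeas : Measurable (fun y => (densR m_sd θ_sd y).toNNReal) :=
    (measurable_densR m_sd θ_sd).real_toNNReal
  have hν₂eq : ν₂ = volume.withDensity (fun y => ((densR m_sd θ_sd y).toNNReal : ℝ≥0∞)) := by
    rw [hν₂, gammaLaw_eq]
    rfl
  have hint_tail : Integrable tail ν₂ := by
    rw [hν₂eq]
    rw [integrable_withDensity_iff_integrable_smul hdmeas]
    exact hintW.congr (ae_of_all _ fun y => (hW y).symm)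
  have hitail : ∫ y, tail y ∂ν₂ = ∫ y in Set.Ioi 0, h y := by
    rw [hν₂eq, integral_withDensity_eq_integral_smul hdmeas]
    rw [integral_congr_ae (ae_of_all _ hW)]
    rw [MeasureTheory.integral_indicator measurableSet_Ici, integral_Ici_eq_integral_Ioi]
  -- tail is a.e. nonneg
  have htail_nonneg : 0 ≤ᵐ[ν₂] tail := by
    filter_upwards [hae2] with y hy
    have := hcnonneg y hy
    rw [htail_def]
    have hτ : 0 ≤ c y / θ_rd := by positivity
    exact mul_nonneg (Real.exp_pos _).le
      (Finset.sum_nonneg fun j _ => div_nonneg (pow_nonneg hτ j) (Nat.cast_nonneg _))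
  have h3 : (ν₁.prod ν₂) Sᶜ = ENNReal.ofReal (∫ y, tail y ∂ν₂) := by
    rw [h2, MeasureTheory.ofReal_integral_eq_lintegral_ofReal hint_tail htail_nonneg]
  -- put everything together
  have hT_nonneg : 0 ≤ ∫ y, tail y ∂ν₂ := integral_nonneg_of_ae htail_nonneg
  have h4 : (ν₁.prod ν₂) S = 1 - ENNReal.ofReal (∫ y, tail y ∂ν₂) := by
    rw [← h3, prob_compl_eq_one_sub (μ := ν₁.prod ν₂) hS]
    exact (ENNReal.sub_sub_cancel ENNReal.one_ne_top prob_le_one).symm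
  have hle1 : ENNReal.ofReal (∫ y, tail y ∂ν₂) ≤ 1 := by
    rw [← h3]
    exact prob_le_one
  rw [h1, h4, ENNReal.toReal_sub_of_le hle1 ENNReal.one_ne_top, ENNReal.toReal_one,
    ENNReal.toReal_ofReal hT_nonneg, hitail, hval]
  -- final arithmetic
  congr 1
  rw [Finset.mul_sum]
  refine Finset.sum_congr rfl fun m _ => ?_
  rw [Finset.mul_sum]
  refine Finset.sum_congr rfl fun k _ => ?_
  have hGsd : Real.Gamma (m_sd : ℝ) = (n₂.factorial : ℝ) := by
    rw [hn₂]
    push_cast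
    exact Real.Gamma_nat_eq_factorial n₂
  have hGk : Real.Gamma ((k : ℝ) + m_sd) = ((k+n₂).factorial : ℝ) := by
    rw [hn₂]
    rw [show (k : ℝ) + ((n₂+1 : ℕ) : ℝ) = ((k+n₂ : ℕ) : ℝ) + 1 by push_cast; ring]
    exact Real.Gamma_nat_eq_factorial (k+n₂)
  rw [hGsd, hGk, hn₂]
  rw [show k + (n₂+1) = k+n₂+1 from rfl]
  have hfac_m : ((m.factorial : ℝ)) ≠ 0 := Nat.cast_ne_zero.mpr m.factorial_ne_zero
  have hfac_n : ((n₂.factorial : ℝ)) ≠ 0 := Nat.cast_ne_zero.mpr n₂.factorial_ne_zero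
  have hlamne : lam ≠ 0 := ne_of_gt hlam
  have hθne : θ_sd ≠ 0 := ne_of_gt hθ_sd
  field_simp
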